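/- arXiv:1610.05862 — 12 statements merged into one kernel-verified Lean document; each statement's English description precedes it below -/
import Mathlib

section
/- Let A be an n×N matrix of compact real intervals, g : ℝ → ℝ, and G a map from compact intervals to compact intervals that is an interval extension of g, i.e. for every compact interval I (contained in the domain where G is applied below) and every y ∈ I one has g(y) ∈ G(I). Choose real central points a_i with L(A_i) ≤ a_i ≤ U(A_i) for each i, set ω = Σ_{i=1}^n a_i, and let r ≥ 0 satisfy |ρ_g(ω, δ)| ≤ r for all δ ∈ ℝ^n with L(A_i) ≤ a_i + δ_i ≤ U(A_i) for all i. Fix k ∈ {1,…,n} and define interval coefficients C_i^j = G(ω − a_i + A_i^j) − ((n−1)/n)·g(ω) for all i, j, and then replace C_k^j by C_k^j + [−r, r] for all j. Then for every choice of column indices j_1,…,j_n ∈ {1,…,N} and every choice of points y_i ∈ A_i^{j_i}, one has g(Σ_{i=1}^n y_i) ∈ Σ_{i=1}^n C_i^{j_i} (Minkowski sum of intervals). -/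
open Finset Pointwise

/-- Correctness of the univariate composition rule (Algorithm 1) of interval
superposition arithmetic: if `G` is an interval extension of `g`, the central
points `a i` satisfy `L i ≤ a i ≤ U i`, `ω = ∑ i, a i`, and `r ≥ 0` bounds the
remainder expression `ρ_g(ω, δ)` for all admissible `δ`, then the output
coefficients `C i j = G(ω - a i + A i j) - ((n-1)/n)·g(ω)` (with the remainder
interval `[-r, r]` added to row `k`) satisfy
`g (∑ i, y i) ∈ ∑ i, C i (j i)` (Minkowski sum) for every choice of column
indices `j` and points `y i ∈ A i (j i)`. -/
theorem stmt1 {ι κ : Type*} [Fintype ι] [DecidableEq ι] [Fintype κ] [Nonempty ι] [Nonempty κ]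
    (Al Au : ι → κ → ℝ) (hA : ∀ i j, Al i j ≤ Au i j)
    (L U : ι → ℝ)
    (hL : ∀ i, L i = univ.inf' univ_nonempty (Al i))
    (hU : ∀ i, U i = univ.sup' univ_nonempty (Au i))
    (g : ℝ → ℝ) (G : ℝ × ℝ → ℝ × ℝ)
    (hG : ∀ p : ℝ × ℝ, p.1 ≤ p.2 → ∀ y ∈ Set.Icc p.1 p.2,
      g y ∈ Set.Icc (G p).1 (G p).2)
    (a : ι → ℝ) (ha : ∀ i, L i ≤ a i ∧ a i ≤ U i)
    (ω : ℝ) (hω : ω = ∑ i, a i)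
    (r : ℝ) (hr : 0 ≤ r)
    (hrem : ∀ δ : ι → ℝ, (∀ i, L i ≤ a i + δ i ∧ a i + δ i ≤ U i) →
      |∑ i, g (ω + δ i) - ((Fintype.card ι : ℝ) - 1) * g ω - g (ω + ∑ i, δ i)| ≤ r)
    (k : ι) (C : ι → κ → Set ℝ)
    (hC : ∀ i j, C i j =
      Set.Icc (G (ω - a i + Al i j, ω - a i + Au i j)).1
              (G (ω - a i + Al i j, ω - a i + Au i j)).2
      + ({-(((Fintype.card ι : ℝ) - 1) / (Fintype.card ι : ℝ) * g ω)} : Set ℝ)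
      + (if i = k then Set.Icc (-r) r else 0))
    (j : ι → κ) (y : ι → ℝ) (hy : ∀ i, y i ∈ Set.Icc (Al i (j i)) (Au i (j i))) :
    g (∑ i, y i) ∈ ∑ i, C i (j i) := by
  set n : ℝ := (Fintype.card ι : ℝ) with hn
  have hnpos : (0:ℝ) < n := by
    simp [hn, Fintype.card_pos]
  set δ : ι → ℝ := fun i => y i - a i with hδ
  have hadm : ∀ i, L i ≤ a i + δ i ∧ a i + δ i ≤ U i := by
    intro i
    have h1 := (hy i).1
    have h2 := (hy i).2
    constructor
    · rw [hL i]
      calc univ.inf' univ_nonempty (Al i) ≤ Al i (j i) :=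
            inf'_le _ (mem_univ _)
        _ ≤ a i + δ i := by simp [hδ]; linarith
    · rw [hU i]
      calc a i + δ i ≤ Au i (j i) := by simp [hδ]; linarith
        _ ≤ univ.sup' univ_nonempty (Au i) := le_sup' _ (mem_univ _)
  have hρ := hrem δ hadm
  set ρ : ℝ := ∑ i, g (ω + δ i) - (n - 1) * g ω - g (ω + ∑ i, δ i) with hρdef
  set x : ι → ℝ := fun i =>
    g (ω + δ i) - (n - 1) / n * g ω + (if i = k then -ρ else 0) with hx
  have hmem : ∀ i ∈ univ, x i ∈ C i (j i) := by
    intro i _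
    rw [hC i (j i)]
    have hle : ω - a i + Al i (j i) ≤ ω - a i + Au i (j i) := by
      linarith [hA i (j i)]
    have hyin : ω + δ i ∈ Set.Icc (ω - a i + Al i (j i)) (ω - a i + Au i (j i)) := by
      constructor <;> simp [hδ] <;> linarith [(hy i).1, (hy i).2]
    have hg := hG (ω - a i + Al i (j i), ω - a i + Au i (j i)) hle _ hyin
    have h1 : g (ω + δ i) - (n - 1) / n * g ω ∈
        Set.Icc (G (ω - a i + Al i (j i), ω - a i + Au i (j i))).1
                (G (ω - a i + Al i (j i), ω - a i + Au i (j i))).2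
        + ({-((n - 1) / n * g ω)} : Set ℝ) := by
      rw [Set.add_singleton]
      exact ⟨_, hg, by ring⟩
    by_cases hik : i = k
    · have h2 : -ρ ∈ Set.Icc (-r) r := by
        rw [abs_le] at hρ
        constructor <;> linarith [hρ.1, hρ.2]
      have := Set.add_mem_add h1 h2
      simpa [hx, hik] using this
    · have h2 : (0:ℝ) ∈ (0 : Set ℝ) := rfl
      have := Set.add_mem_add h1 h2
      simpa [hx, hik] using this
  have hsum : g (∑ i, y i) = ∑ i, x i := by
    have hcard : ∑ _i : ι, (n - 1) / n * g ω = (n - 1) * g ω := by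
      rw [Finset.sum_const, card_univ, nsmul_eq_mul]
      field_simp
      rw [← hn]
    have hys : ∑ i, y i = ω + ∑ i, δ i := by
      simp [hδ, Finset.sum_sub_distrib, hω]
    rw [hys]
    simp only [hx, Finset.sum_add_distrib, Finset.sum_sub_distrib, hcard,
      Finset.sum_ite_eq' univ k, mem_univ, if_true]
    rw [hρdef]; ring
  rw [hsum]
  exact Set.finset_sum_mem_finset_sum univ _ x hmem
end

section
/- Let A and B be n×N matrices of compact real intervals. Set a_i = (U(A_i)+L(A_i))/2, b_i = (U(B_i)+L(B_i))/2, α = Σ_{i=1}^n a_i, β = Σ_{i=1}^n b_i, γ = Σ_{i=1}^n a_i b_i, ω = (αβ − γ)/n, ρ_i(A) = (U(A_i)−L(A_i))/2, ρ_i(B) = (U(B_i)−L(B_i))/2, and R(A,B) = (Σ_{i=1}^n ρ_i(A))(Σ_{i=1}^n ρ_i(B)) − Σ_{i=1}^n ρ_i(A) ρ_i(B). Fix k ∈ {1,…,n} and define interval coefficients C_i^j = (A_i^j + (α − a_i)) * (B_i^j + (β − b_i)) − (α − a_i)(β − b_i) − ω for all i, j, where * denotes the pointwise (elementwise) product of intervals,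 and then replace C_k^j by C_k^j + [−R(A,B), R(A,B)] for all j. Then for every choice of column indices j_1,…,j_n ∈ {1,…,N} and every choice of points y_i ∈ A_i^{j_i} and z_i ∈ B_i^{j_i}, one has (Σ_{i=1}^n y_i)·(Σ_{i=1}^n z_i) ∈ Σ_{i=1}^n C_i^{j_i} (Minkowski sum of intervals). -/
open Finset Pointwise

/-- Correctness of the product rule (Algorithm 2) of interval superposition
arithmetic: with central points `a i, b i`, sums `α, β, γ`, offset
`ω = (αβ - γ)/n`, radii `ρA i, ρB i` and remainder bound `R`, the output
coefficients `C i j = (A i j + (α - a i)) * (B i j + (β - b i))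
- (α - a i)(β - b i) - ω` (with the remainder interval `[-R, R]` added to row
`k`) satisfy `(∑ i, y i) * (∑ i, z i) ∈ ∑ i, C i (j i)` (Minkowski sum) for
every choice of column indices `j` and points `y i ∈ A i (j i)`,
`z i ∈ B i (j i)`. Here `*` on sets is the pointwise product. -/
theorem stmt2 {ι κ : Type*} [Fintype ι] [DecidableEq ι] [Fintype κ]
    [Nonempty ι] [Nonempty κ]
    (Al Au Bl Bu : ι → κ → ℝ)
    (hA : ∀ i j, Al i j ≤ Au i j) (hB : ∀ i j, Bl i j ≤ Bu i j)
    (LA UA LB UB : ι → ℝ)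
    (hLA : ∀ i, LA i = univ.inf' univ_nonempty (Al i))
    (hUA : ∀ i, UA i = univ.sup' univ_nonempty (Au i))
    (hLB : ∀ i, LB i = univ.inf' univ_nonempty (Bl i))
    (hUB : ∀ i, UB i = univ.sup' univ_nonempty (Bu i))
    (a b : ι → ℝ)
    (ha : ∀ i, a i = (UA i + LA i) / 2) (hb : ∀ i, b i = (UB i + LB i) / 2)
    (α β γ ω : ℝ)
    (hα : α = ∑ i, a i) (hβ : β = ∑ i, b i) (hγ : γ = ∑ i, a i * b i)
    (hω : ω = (α * β - γ) / (Fintype.card ι : ℝ))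
    (ρA ρB : ι → ℝ)
    (hρA : ∀ i, ρA i = (UA i - LA i) / 2) (hρB : ∀ i, ρB i = (UB i - LB i) / 2)
    (R : ℝ) (hR : R = (∑ i, ρA i) * (∑ i, ρB i) - ∑ i, ρA i * ρB i)
    (k : ι) (C : ι → κ → Set ℝ)
    (hC : ∀ i j, C i j =
      Set.Icc (Al i j + (α - a i)) (Au i j + (α - a i))
        * Set.Icc (Bl i j + (β - b i)) (Bu i j + (β - b i))
      + ({-((α - a i) * (β - b i)) - ω} : Set ℝ)
      + (if i = k then Set.Icc (-R) R else 0))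
    (j : ι → κ) (y z : ι → ℝ)
    (hy : ∀ i, y i ∈ Set.Icc (Al i (j i)) (Au i (j i)))
    (hz : ∀ i, z i ∈ Set.Icc (Bl i (j i)) (Bu i (j i))) :
    (∑ i, y i) * (∑ i, z i) ∈ ∑ i, C i (j i) := by
  classical
  -- remainder term
  set r : ℝ := ∑ i, (y i - a i) * ((∑ m, (z m - b m)) - (z i - b i)) with hr
  -- pointwise radius bounds
  have hpA : ∀ i, |y i - a i| ≤ ρA i := by
    intro i
    have h1 : LA i ≤ Al i (j i) := by
      rw [hLA]; exact Finset.inf'_le _ (mem_univ _)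
    have h2 : Au i (j i) ≤ UA i := by
      rw [hUA]; exact Finset.le_sup' _ (mem_univ _)
    have h3 := (hy i).1
    have h4 := (hy i).2
    rw [abs_le, ha i, hρA i]
    constructor <;> [linarith; linarith]
  have hpB : ∀ i, |z i - b i| ≤ ρB i := by
    intro i
    have h1 : LB i ≤ Bl i (j i) := by
      rw [hLB]; exact Finset.inf'_le _ (mem_univ _)
    have h2 : Bu i (j i) ≤ UB i := by
      rw [hUB]; exact Finset.le_sup' _ (mem_univ _)
    have h3 := (hz i).1
    have h4 := (hz i).2
    rw [abs_le, hb i, hρB i]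
    constructor <;> [linarith; linarith]
  -- bound the remainder
  have hrR : |r| ≤ R := by
    have hstep : ∀ i, |(y i - a i) * ((∑ m, (z m - b m)) - (z i - b i))|
        ≤ ρA i * ((∑ m, ρB m) - ρB i) := by
      intro i
      rw [abs_mul]
      have ht : |(∑ m, (z m - b m)) - (z i - b i)| ≤ (∑ m, ρB m) - ρB i := by
        have he : (∑ m, (z m - b m)) - (z i - b i)
            = ∑ m ∈ univ.erase i, (z m - b m) := by
          rw [← Finset.add_sum_erase _ _ (mem_univ i)]; ring
        have he2 : (∑ m, ρB m) - ρB i = ∑ m ∈ univ.erase i, ρB m := by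
          rw [← Finset.add_sum_erase _ _ (mem_univ i)]; ring
        rw [he, he2]
        refine (Finset.abs_sum_le_sum_abs _ _).trans ?_
        exact Finset.sum_le_sum fun m _ => hpB m
      exact mul_le_mul (hpA i) ht (abs_nonneg _) ((abs_nonneg _).trans (hpA i))
    have h1 : |r| ≤ ∑ i, ρA i * ((∑ m, ρB m) - ρB i) := by
      rw [hr]
      refine (Finset.abs_sum_le_sum_abs _ _).trans ?_
      exact Finset.sum_le_sum fun i _ => hstep i
    have h2 : ∑ i, ρA i * ((∑ m, ρB m) - ρB i) = R := by
      rw [hR, Finset.sum_mul, ← Finset.sum_sub_distrib]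
      exact Finset.sum_congr rfl fun i _ => by ring
    linarith [h1, h2.le, h2.ge]
  -- the witness decomposition
  set w : ι → ℝ := fun i =>
    (y i + (α - a i)) * (z i + (β - b i)) + (-((α - a i) * (β - b i)) - ω)
      + (if i = k then r else 0) with hw
  have hmem : ∀ i, w i ∈ C i (j i) := by
    intro i
    rw [hC i (j i), hw]
    refine Set.add_mem_add (Set.add_mem_add ?_ rfl) ?_
    · exact Set.mul_mem_mul
        ⟨by linarith [(hy i).1], by linarith [(hy i).2]⟩
        ⟨by linarith [(hz i).1], by linarith [(hz i).2]⟩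
    · by_cases hik : i = k
      · simp only [hik, if_true]
        exact abs_le.mp hrR |>.imp id id |> fun h => ⟨by linarith [(abs_le.mp hrR).1, neg_abs_le r], (le_abs_self r).trans hrR⟩
      · simp only [hik, if_false]
        exact Set.zero_mem_zero
  -- the sum identity
  have hn : (Fintype.card ι : ℝ) ≠ 0 := by
    exact_mod_cast Fintype.card_ne_zero
  have hnω : (Fintype.card ι : ℝ) * ω = α * β - γ := by
    rw [hω]; field_simp
  have hsum : (∑ i, y i) * (∑ i, z i) = ∑ i, w i := by
    have e1 : ∑ i, w i = (∑ i, ((y i + (α - a i)) * (z i + (β - b i))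
        + (-((α - a i) * (β - b i)) - ω))) + r := by
      rw [hw, Finset.sum_add_distrib, Finset.sum_ite_eq' univ k fun _ => r,
        if_pos (mem_univ k)]
    have e2 : ∑ i, ((y i + (α - a i)) * (z i + (β - b i))
        + (-((α - a i) * (β - b i)) - ω))
        = (∑ i, y i * z i) + β * (∑ i, y i) - (∑ i, y i * b i)
          + α * (∑ i, z i) - (∑ i, a i * z i)
          - (Fintype.card ι : ℝ) * ω := by
      have : ∀ i, (y i + (α - a i)) * (z i + (β - b i))
          + (-((α - a i) * (β - b i)) - ω)
          = (y i * z i + β * y i - y i * b i + α * z i - a i * z i) - ω := by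
        intro i; ring
      rw [Finset.sum_congr rfl fun i _ => this i, Finset.sum_sub_distrib,
        Finset.sum_const, Finset.card_univ, nsmul_eq_mul]
      congr 1
      rw [Finset.sum_sub_distrib, Finset.sum_add_distrib, Finset.sum_sub_distrib,
        Finset.sum_add_distrib, ← Finset.mul_sum, ← Finset.mul_sum]
    have e3 : r = ((∑ i, y i) - α) * ((∑ i, z i) - β)
        - ((∑ i, y i * z i) - (∑ i, y i * b i) - (∑ i, a i * z i) + γ) := by
      rw [hr, hγ]
      have : ∀ i, (y i - a i) * ((∑ m, (z m - b m)) - (z i - b i))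
          = (y i - a i) * (∑ m, (z m - b m))
            - (y i * z i - y i * b i - a i * z i + a i * b i) := by
        intro i; ring
      have e0 : ∑ x, (y x * z x - y x * b x - a x * z x + a x * b x)
          = (∑ i, y i * z i) - (∑ i, y i * b i) - (∑ i, a i * z i)
            + ∑ i, a i * b i := by
        rw [Finset.sum_add_distrib, Finset.sum_sub_distrib, Finset.sum_sub_distrib]
      rw [Finset.sum_congr rfl fun i _ => this i, Finset.sum_sub_distrib,
        ← Finset.sum_mul, Finset.sum_sub_distrib, e0, Finset.sum_sub_distrib, hα, hβ]
    rw [e1, e2, e3, hnω]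
    ring
  rw [hsum]
  exact Set.finset_sum_mem_finset_sum _ _ _ fun i _ => hmem i
end

section
/- Let D ⊆ ℝ be an interval, g : ℝ → ℝ twice continuously differentiable on D with |g''(ξ)| ≤ M for all ξ ∈ D, and let ω ∈ D and δ ∈ ℝ^n be such that ω + δ_i ∈ D for all i and ω + Σ_{i=1}^n δ_i ∈ D. Then |ρ_g(ω, δ)| ≤ M (Σ_{i=1}^n |δ_i|)². In particular, if A is an n×N matrix of compact intervals and |δ_i| ≤ U(A_i) − L(A_i) for all i, then |ρ_g(ω, δ)| ≤ M (μ(A) − λ(A))². -/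
open Finset Set

/-- Second-order Taylor bound on a convex set. -/
theorem taylor2_aux (D : Set ℝ) (hD : Convex ℝ D)
    (g g' g'' : ℝ → ℝ)
    (hg' : ∀ x ∈ D, HasDerivWithinAt g (g' x) D x)
    (hg'' : ∀ x ∈ D, HasDerivWithinAt g' (g'' x) D x)
    (M : ℝ) (hM : ∀ ξ ∈ D, |g'' ξ| ≤ M)
    {x y : ℝ} (hx : x ∈ D) (hy : y ∈ D) :
    |g y - g x - (y - x) * g' x| ≤ M / 2 * (y - x) ^ 2 := by
  -- g' is M-Lipschitz on D
  have hlip : ∀ a ∈ D, ∀ b ∈ D, |g' b - g' a| ≤ M * |b - a| := fun a ha b hb =>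
    hD.norm_image_sub_le_of_norm_hasDerivWithin_le hg'' hM ha hb
  set d := y - x with hd
  set F : ℝ → ℝ := fun t => g (x + t * d) - g x - t * d * g' x with hF
  set F' : ℝ → ℝ := fun t => d * (g' (x + t * d) - g' x) with hF'
  set B : ℝ → ℝ := fun t => M / 2 * d ^ 2 * t ^ 2 with hB
  set B' : ℝ → ℝ := fun t => M * d ^ 2 * t with hB'
  have hmem : ∀ t ∈ Icc (0:ℝ) 1, x + t * d ∈ D := by
    intro t ht
    have := hD.add_smul_sub_mem hx hy ht
    simpa [hd, smul_eq_mul] using this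
  have hgc : ContinuousOn g D := fun z hz => (hg' z hz).continuousWithinAt
  have hFc : ContinuousOn F (Icc 0 1) := by
    apply ContinuousOn.sub
    apply ContinuousOn.sub
    · exact hgc.comp (by fun_prop) hmem
    · fun_prop
    · fun_prop
  have hFd : ∀ t ∈ Ico (0:ℝ) 1, HasDerivWithinAt F (F' t) (Ici t) t := by
    intro t ht
    have hIcc : HasDerivWithinAt F (F' t) (Icc t 1) t := by
      have hh : HasDerivWithinAt (fun u : ℝ => x + u * d) d (Icc t 1) t := by
        simpa using ((hasDerivAt_id t).mul_const d).const_add x |>.hasDerivWithinAt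
      have hmaps : Set.MapsTo (fun u : ℝ => x + u * d) (Icc t 1) D := by
        intro u hu
        exact hmem u ⟨le_trans ht.1 hu.1, hu.2⟩
      have hcomp := (hg' _ (hmem t ⟨ht.1, ht.2.le⟩)).comp t hh hmaps
      have : HasDerivWithinAt (fun u : ℝ => g (x + u * d)) (g' (x + t * d) * d) (Icc t 1) t :=
        hcomp
      have h2 : HasDerivWithinAt (fun u : ℝ => g x + u * d * g' x) (d * g' x) (Icc t 1) t := by
        have : HasDerivWithinAt (fun u : ℝ => u * (d * g' x)) (d * g' x) (Icc t 1) t := by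
          simpa using ((hasDerivAt_id t).mul_const (d * g' x)).hasDerivWithinAt
        simpa [mul_assoc] using this.const_add (g x)
      have h3 := this.sub h2
      convert h3 using 1
      · rfl
      · rfl
      · ext u; simp [hF]; ring
      · show d * (g' (x + t * d) - g' x) = _; ring
    exact hIcc.mono_of_mem_nhdsWithin
      (by rw [← nhdsWithin_Icc_eq_nhdsGE ht.2]; exact self_mem_nhdsWithin)
  have hBd : ∀ t : ℝ, HasDerivAt B (B' t) t := by
    intro t
    have : HasDerivAt (fun t : ℝ => M / 2 * d ^ 2 * t ^ 2) (M / 2 * d ^ 2 * (2 * t)) t := by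
      exact (hasDerivAt_pow 2 t).const_mul _ |>.congr_deriv (by push_cast; ring)
    simpa [hB, hB'] using this.congr_deriv (by ring)
  have hbound : ∀ t ∈ Ico (0:ℝ) 1, ‖F' t‖ ≤ B' t := by
    intro t ht
    have h1 : |g' (x + t * d) - g' x| ≤ M * |t * d| := by
      simpa using hlip x hx _ (hmem t ⟨ht.1, ht.2.le⟩)
    have : ‖F' t‖ = |d| * |g' (x + t * d) - g' x| := by
      simp [hF', abs_mul]
    rw [this]
    calc |d| * |g' (x + t * d) - g' x| ≤ |d| * (M * |t * d|) := by
          apply mul_le_mul_of_nonneg_left h1 (abs_nonneg d)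
      _ = M * (|d| * |d|) * |t| := by rw [abs_mul]; ring
      _ = M * d ^ 2 * |t| := by rw [abs_mul_abs_self, ← sq]
      _ = B' t := by rw [abs_of_nonneg ht.1]
  have key := image_norm_le_of_norm_deriv_right_le_deriv_boundary hFc hFd
    (by simp [hF, hB]) hBd hbound (right_mem_Icc.2 zero_le_one)
  simpa [hF, hB, hd] using key


open Finset

/-- Local overestimation bound (Lemma 4.1): if `g` is twice continuously
differentiable on an interval (convex set) `D ⊆ ℝ` with `|g''| ≤ M` on `D`,
and `ω`, `ω + δ i`, `ω + ∑ i, δ i` all lie in `D`, then the remainder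
expression `ρ_g(ω, δ)` is bounded by `M (∑ i, |δ i|)²`; in particular, if
moreover `|δ i| ≤ U i - L i` for the row bounds of an interval matrix `A`,
then it is bounded by `M (μ(A) - λ(A))²`. -/
theorem stmt3 {ι κ : Type*} [Fintype ι] [Fintype κ] [Nonempty κ]
    (D : Set ℝ) (hD : Convex ℝ D)
    (g g' g'' : ℝ → ℝ)
    (hg' : ∀ x ∈ D, HasDerivWithinAt g (g' x) D x)
    (hg'' : ∀ x ∈ D, HasDerivWithinAt g' (g'' x) D x)
    (hcont : ContinuousOn g'' D)
    (M : ℝ) (hM : ∀ ξ ∈ D, |g'' ξ| ≤ M)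
    (ω : ℝ) (hω : ω ∈ D) (δ : ι → ℝ)
    (hδD : ∀ i, ω + δ i ∈ D) (hsum : ω + ∑ i, δ i ∈ D)
    (Al Au : ι → κ → ℝ) (hA : ∀ i j, Al i j ≤ Au i j)
    (L U : ι → ℝ)
    (hL : ∀ i, L i = univ.inf' univ_nonempty (Al i))
    (hU : ∀ i, U i = univ.sup' univ_nonempty (Au i))
    (hδA : ∀ i, |δ i| ≤ U i - L i) :
    |∑ i, g (ω + δ i) - ((Fintype.card ι : ℝ) - 1) * g ω - g (ω + ∑ i, δ i)|
        ≤ M * (∑ i, |δ i|) ^ 2 ∧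
    |∑ i, g (ω + δ i) - ((Fintype.card ι : ℝ) - 1) * g ω - g (ω + ∑ i, δ i)|
        ≤ M * ((∑ i, U i) - ∑ i, L i) ^ 2 := by
  have hM0 : 0 ≤ M := le_trans (abs_nonneg _) (hM ω hω)
  set S := ∑ i, δ i with hS
  set R := ∑ i, |δ i| with hR
  have hR0 : 0 ≤ R := Finset.sum_nonneg fun i _ => abs_nonneg _
  have tay : ∀ y ∈ D, |g y - g ω - (y - ω) * g' ω| ≤ M / 2 * (y - ω) ^ 2 :=
    fun y hy => taylor2_aux D hD g g' g'' hg' hg'' M hM hω hy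
  have hterm : ∀ i, |g (ω + δ i) - g ω - δ i * g' ω| ≤ M / 2 * δ i ^ 2 := by
    intro i
    have := tay _ (hδD i)
    simpa using this
  have hSterm : |g (ω + S) - g ω - S * g' ω| ≤ M / 2 * S ^ 2 := by
    have := tay _ hsum
    simpa using this
  have hid : ∑ i, g (ω + δ i) - ((Fintype.card ι : ℝ) - 1) * g ω - g (ω + S)
      = (∑ i, (g (ω + δ i) - g ω - δ i * g' ω)) - (g (ω + S) - g ω - S * g' ω) := by
    rw [Finset.sum_sub_distrib, Finset.sum_sub_distrib, ← Finset.sum_mul,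
      Finset.sum_const, Finset.card_univ, nsmul_eq_mul, ← hS]
    ring
  have hsq : ∑ i, δ i ^ 2 ≤ R ^ 2 := by
    calc ∑ i, δ i ^ 2 = ∑ i, |δ i| * |δ i| := by
          refine Finset.sum_congr rfl fun i _ => ?_
          rw [abs_mul_abs_self, sq]
      _ ≤ ∑ i, |δ i| * R := Finset.sum_le_sum fun i _ =>
            mul_le_mul_of_nonneg_left (Finset.single_le_sum
              (fun j _ => abs_nonneg (δ j)) (Finset.mem_univ i)) (abs_nonneg _)
      _ = R ^ 2 := by rw [← Finset.sum_mul, sq]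
  have hSle : |S| ≤ R := Finset.abs_sum_le_sum_abs _ _
  have hS2 : S ^ 2 ≤ R ^ 2 := by
    rw [← sq_abs S]
    exact pow_le_pow_left₀ (abs_nonneg _) hSle 2
  have main : |∑ i, g (ω + δ i) - ((Fintype.card ι : ℝ) - 1) * g ω - g (ω + S)|
      ≤ M * R ^ 2 := by
    rw [hid]
    calc |(∑ i, (g (ω + δ i) - g ω - δ i * g' ω)) - (g (ω + S) - g ω - S * g' ω)|
        ≤ |∑ i, (g (ω + δ i) - g ω - δ i * g' ω)| + |g (ω + S) - g ω - S * g' ω| :=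
          abs_sub _ _
      _ ≤ (∑ i, M / 2 * δ i ^ 2) + M / 2 * S ^ 2 := by
          refine add_le_add (le_trans (Finset.abs_sum_le_sum_abs _ _)
            (Finset.sum_le_sum fun i _ => hterm i)) hSterm
      _ = M / 2 * (∑ i, δ i ^ 2) + M / 2 * S ^ 2 := by rw [Finset.mul_sum]
      _ ≤ M / 2 * R ^ 2 + M / 2 * R ^ 2 := by
          refine add_le_add (mul_le_mul_of_nonneg_left hsq (by linarith))
            (mul_le_mul_of_nonneg_left hS2 (by linarith))
      _ = M * R ^ 2 := by ring
  refine ⟨main, le_trans main ?_⟩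
  have hRle : R ≤ (∑ i, U i) - ∑ i, L i := by
    rw [← Finset.sum_sub_distrib]
    exact Finset.sum_le_sum fun i _ => hδA i
  exact mul_le_mul_of_nonneg_left (pow_le_pow_left₀ hR0 hRle 2) hM0
end

section
/- Let n ≥ 1, ω ∈ ℝ, and let δ, s ∈ ℝ^n satisfy |δ_i| ≤ s_i for all i. Then for g(x) = x², |ρ_g(ω, δ)| = |Σ_{i=1}^n (ω + δ_i)² − (n−1) ω² − (ω + Σ_{i=1}^n δ_i)²| ≤ Σ_{i=1}^n (σ − s_i) s_i, where σ = Σ_{i=1}^n s_i. -/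
open Finset

/-- Remainder bound for the squaring atom function `g(x) = x²` in interval
superposition arithmetic. -/
theorem stmt9 {ι : Type*} [Fintype ι] [Nonempty ι]
    (ω : ℝ) (δ s : ι → ℝ) (hδ : ∀ i, |δ i| ≤ s i)
    (σ : ℝ) (hσ : σ = ∑ i, s i) :
    |∑ i, (ω + δ i) ^ 2 - ((Fintype.card ι : ℝ) - 1) * ω ^ 2 - (ω + ∑ i, δ i) ^ 2|
      ≤ ∑ i, (σ - s i) * s i := by
  classical
  set D := ∑ i, δ i with hD
  have key : ∑ i, (ω + δ i) ^ 2 - ((Fintype.card ι : ℝ) - 1) * ω ^ 2 - (ω + D) ^ 2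
      = ∑ i, (δ i ^ 2 - δ i * D) := by
    have h1 : ∑ i, (ω + δ i) ^ 2 = ∑ i, (ω ^ 2 + 2 * ω * δ i + δ i ^ 2) :=
      Finset.sum_congr rfl fun i _ => by ring
    have h2 : ∑ i, (δ i ^ 2 - δ i * D) = (∑ i, δ i ^ 2) - D * D := by
      rw [Finset.sum_sub_distrib, ← Finset.sum_mul, ← hD]
    rw [h1, h2]
    simp only [Finset.sum_add_distrib, ← Finset.mul_sum, Finset.sum_const,
      Finset.card_univ, nsmul_eq_mul, ← hD]
    ring
  rw [key]
  refine (Finset.abs_sum_le_sum_abs _ _).trans (Finset.sum_le_sum fun i _ => ?_)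
  have hsi : (0:ℝ) ≤ s i := le_trans (abs_nonneg _) (hδ i)
  have h2 : |δ i - D| ≤ σ - s i := by
    have he : δ i - D = -(∑ j ∈ Finset.univ.erase i, δ j) := by
      rw [hD, ← Finset.sum_erase_add Finset.univ δ (Finset.mem_univ i)]; ring
    rw [he, abs_neg]
    refine (Finset.abs_sum_le_sum_abs δ _).trans ?_
    have hσ' : σ - s i = ∑ j ∈ Finset.univ.erase i, s j := by
      rw [hσ, ← Finset.sum_erase_add Finset.univ s (Finset.mem_univ i)]; ring
    rw [hσ']
    exact Finset.sum_le_sum fun j _ => hδ j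
  calc |δ i ^ 2 - δ i * D| = |δ i| * |δ i - D| := by
        rw [show δ i ^ 2 - δ i * D = δ i * (δ i - D) by ring, abs_mul]
    _ ≤ s i * (σ - s i) := mul_le_mul (hδ i) h2 (abs_nonneg _) hsi
    _ = (σ - s i) * s i := mul_comm _ _
end

section
/- Let n ≥ 1, let z_1,…,z_n be complex numbers, and let s_1,…,s_n be nonnegative reals with |z_i − 1| ≤ s_i for all i. Then |Σ_{i=1}^n z_i − Π_{i=1}^n z_i − (n−1)| ≤ Π_{i=1}^n (1 + s_i) − Σ_{i=1}^n s_i − 1. -/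
open Finset

lemma stmt11_aux {ι : Type*} [Fintype ι] [DecidableEq ι] {R : Type*} [CommRing R] (t : ι → R) :
    ∏ i, (1 + t i) =
      1 + (∑ i, t i) +
        ∑ S ∈ univ.powerset.filter (fun S : Finset ι => 2 ≤ S.card), ∏ i ∈ S, t i := by
  have h := Finset.prod_add t (fun _ => (1 : R)) univ
  simp only [prod_const_one, mul_one, add_comm (t _) 1] at h
  rw [h, ← Finset.sum_filter_add_sum_filter_not univ.powerset (fun S => S.card ≤ 1)]
  have hA : univ.powerset.filter (fun S : Finset ι => S.card ≤ 1)
      = insert ∅ (univ.image ({·})) := by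
    ext S
    simp [Nat.le_one_iff_eq_zero_or_eq_one, Finset.card_eq_one, Finset.card_eq_zero,
      or_comm, eq_comm]
  have hB : univ.powerset.filter (fun S : Finset ι => ¬ S.card ≤ 1)
      = univ.powerset.filter (fun S : Finset ι => 2 ≤ S.card) := by
    apply filter_congr; intro S _; simp; omega
  rw [hA, hB, Finset.sum_insert (by simp), Finset.sum_image Finset.singleton_injective.injOn]
  simp [add_comm, add_assoc, add_left_comm]

/-- Key combinatorial inequality for complex numbers near 1, used in the
derivation of the exponential, sine and cosine remainder bounds of interval
superposition arithmetic. -/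
theorem stmt11 {ι : Type*} [Fintype ι] [Nonempty ι]
    (z : ι → ℂ) (s : ι → ℝ) (hs : ∀ i, 0 ≤ s i)
    (hz : ∀ i, ‖z i - 1‖ ≤ s i) :
    ‖(∑ i, z i) - (∏ i, z i) - ((Fintype.card ι : ℂ) - 1)‖
      ≤ (∏ i, (1 + s i)) - (∑ i, s i) - 1 := by
  classical
  set t : ι → ℂ := fun i => z i - 1 with ht
  set P := univ.powerset.filter (fun S : Finset ι => 2 ≤ S.card) with hP
  have hz' : ∀ i, z i = 1 + t i := fun i => by simp [ht]
  have hprod : ∏ i, z i = 1 + (∑ i, t i) + ∑ S ∈ P, ∏ i ∈ S, t i := by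
    rw [show (∏ i, z i) = ∏ i, (1 + t i) from by simp [hz'], stmt11_aux]
  have hsum : ∑ i, z i = (Fintype.card ι : ℂ) + ∑ i, t i := by
    simp [hz', Finset.sum_add_distrib]
  have hL : (∑ i, z i) - (∏ i, z i) - ((Fintype.card ι : ℂ) - 1)
      = -(∑ S ∈ P, ∏ i ∈ S, t i) := by
    rw [hprod, hsum]; ring
  have hR : (∏ i, (1 + s i)) - (∑ i, s i) - 1 = ∑ S ∈ P, ∏ i ∈ S, s i := by
    rw [stmt11_aux s]; ring
  rw [hL, hR, norm_neg]
  calc ‖∑ S ∈ P, ∏ i ∈ S, t i‖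
      ≤ ∑ S ∈ P, ‖∏ i ∈ S, t i‖ := by
        exact norm_sum_le _ _
    _ ≤ ∑ S ∈ P, ∏ i ∈ S, s i := by
        apply Finset.sum_le_sum
        intro S _
        rw [norm_prod]
        exact Finset.prod_le_prod (fun i _ => norm_nonneg _)
          (fun i _ => hz i)
end

section
/- Let n ≥ 1, ω ∈ ℝ, and δ ∈ ℝ^n be such that ω ≠ 0, ω + δ_i ≠ 0 for all i, and ω + Σ_{k=1}^n δ_k ≠ 0. Then Σ_{i=1}^n 1/(ω + δ_i) − 1/(ω + Σ_{k=1}^n δ_k) − (n−1)/ω = (1/ω) · (1/(ω + Σ_{k=1}^n δ_k)) · Σ_{i=1}^n [ δ_i (δ_i − Σ_{k=1}^n δ_k) / (ω + δ_i) ]. -/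
open Finset

/-- The exact algebraic identity underlying the remainder bound for the
univariate inversion atom function `g(x) = 1/x`. -/
theorem stmt12 {ι : Type*} [Fintype ι] [Nonempty ι]
    (ω : ℝ) (δ : ι → ℝ)
    (hω : ω ≠ 0) (hδ : ∀ i, ω + δ i ≠ 0) (hsum : ω + ∑ k, δ k ≠ 0) :
    (∑ i, 1 / (ω + δ i)) - 1 / (ω + ∑ k, δ k) - ((Fintype.card ι : ℝ) - 1) / ω
      = (1 / ω) * (1 / (ω + ∑ k, δ k))
          * ∑ i, δ i * (δ i - ∑ k, δ k) / (ω + δ i) := by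
  set S := ∑ k, δ k with hSdef
  have h1 : ∀ i : ι, 1 / (ω + δ i) - 1 / ω
      - (1 / ω) * (1 / (ω + S)) * (δ i * (δ i - S) / (ω + δ i))
      = -δ i / (ω * (ω + S)) := by
    intro i
    have hi := hδ i
    field_simp
    ring
  have h2 : ∑ i, (1 / (ω + δ i) - 1 / ω
      - (1 / ω) * (1 / (ω + S)) * (δ i * (δ i - S) / (ω + δ i)))
      = ∑ i, -δ i / (ω * (ω + S)) :=
    Finset.sum_congr rfl fun i _ => h1 i
  rw [Finset.sum_sub_distrib, Finset.sum_sub_distrib, ← Finset.mul_sum] at h2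
  have h3 : ∑ i, -δ i / (ω * (ω + S)) = -S / (ω * (ω + S)) := by
    rw [← Finset.sum_div, ← Finset.sum_neg_distrib, hSdef]
  have h4 : ∑ i : ι, (1 : ℝ) / ω = (Fintype.card ι : ℝ) / ω := by
    rw [Finset.sum_const, Finset.card_univ, nsmul_eq_mul]
    ring
  have haux : (1 : ℝ) / (ω + S) - 1 / ω = -S / (ω * (ω + S)) := by
    rw [div_sub_div _ _ hsum hω, mul_comm (ω + S) ω]
    congr 1
    ring
  rw [h3, h4] at h2
  linear_combination h2 - haux
end

section
/- Let n ≥ 1 and L, U ∈ ℝ^n with L_i ≤ U_i for all i and λ = Σ_{i=1}^n L_i > 0; set μ = Σ_{i=1}^n U_i, a_i = (L_i μ + U_i λ)/(λ + μ), ω = Σ_{i=1}^n a_i, and s_i = max{ (a_i − L_i)/(ω − a_i + L_i), (U_i − a_i)/(ω − a_i + U_i) }. Then for every δ ∈ ℝ^n with L_i ≤ a_i + δ_i ≤ U_i for all i, |Σ_{i=1}^n 1/(ω + δ_i) − (n−1)/ω − 1/(ω + Σ_{i=1}^n δ_i)| ≤ ( Σ_{i=1}^n s_i ( μ − ω − (U_i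 − a_i) ) ) / (ω λ). -/
open Finset

/-- Remainder bound for the inversion atom function `g(x) = 1/x` on the
positive domain in interval superposition arithmetic. -/
theorem stmt13 {ι : Type*} [Fintype ι] [Nonempty ι]
    (L U : ι → ℝ) (hLU : ∀ i, L i ≤ U i)
    (lam mu : ℝ) (hlam : lam = ∑ i, L i) (hmu : mu = ∑ i, U i) (hpos : 0 < lam)
    (a : ι → ℝ) (ha : ∀ i, a i = (L i * mu + U i * lam) / (lam + mu))
    (ω : ℝ) (hω : ω = ∑ i, a i)
    (s : ι → ℝ)
    (hs : ∀ i, s i = max ((a i - L i) / (ω - a i + L i)) ((U i - a i) / (ω - a i + U i)))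
    (δ : ι → ℝ) (hδ : ∀ i, L i ≤ a i + δ i ∧ a i + δ i ≤ U i) :
    |(∑ i, 1 / (ω + δ i)) - ((Fintype.card ι : ℝ) - 1) / ω - 1 / (ω + ∑ i, δ i)|
      ≤ (∑ i, s i * (mu - ω - (U i - a i))) / (ω * lam) := by
  classical
  have hml : lam ≤ mu := by
    rw [hlam, hmu]; exact Finset.sum_le_sum fun i _ => hLU i
  have hlm : 0 < lam + mu := by linarith
  have hlmne : lam + mu ≠ 0 := ne_of_gt hlm
  have hωval : ω = 2 * lam * mu / (lam + mu) := by
    rw [hω]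
    calc ∑ i, a i = (∑ i, (L i * mu + U i * lam)) / (lam + mu) := by
          rw [Finset.sum_div]; exact Finset.sum_congr rfl fun i _ => ha i
      _ = (lam * mu + mu * lam) / (lam + mu) := by
          rw [Finset.sum_add_distrib, ← Finset.sum_mul, ← Finset.sum_mul, ← hlam, ← hmu]
      _ = 2 * lam * mu / (lam + mu) := by ring_nf
  have hmupos : 0 < mu := lt_of_lt_of_le hpos hml
  have hωpos : 0 < ω := by
    rw [hωval]; exact div_pos (by nlinarith) hlm
  have hd : ∀ i, 0 ≤ U i - L i := fun i => sub_nonneg.2 (hLU i)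
  have haL : ∀ i, a i - L i = lam * (U i - L i) / (lam + mu) := fun i => by
    rw [ha i]; field_simp; ring
  have haU : ∀ i, U i - a i = mu * (U i - L i) / (lam + mu) := fun i => by
    rw [ha i]; field_simp; ring
  have haLpos : ∀ i, 0 ≤ a i - L i := fun i => by
    rw [haL i]; exact div_nonneg (mul_nonneg hpos.le (hd i)) hlm.le
  have haUpos : ∀ i, 0 ≤ U i - a i := fun i => by
    rw [haU i]; exact div_nonneg (mul_nonneg hmupos.le (hd i)) hlm.le
  have hdsum : ∀ i, U i - L i ≤ mu - lam := by
    intro i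
    have h := Finset.single_le_sum (f := fun j => U j - L j) (fun j _ => hd j)
      (Finset.mem_univ i)
    rw [Finset.sum_sub_distrib, ← hmu, ← hlam] at h
    exact h
  have hdenomL : ∀ i, lam ≤ ω - a i + L i := by
    intro i
    have h : ω - a i + L i - lam = lam * ((mu - lam) - (U i - L i)) / (lam + mu) := by
      rw [hωval, ha i]; field_simp; ring
    have h2 : 0 ≤ lam * ((mu - lam) - (U i - L i)) / (lam + mu) :=
      div_nonneg (mul_nonneg hpos.le (by linarith [hdsum i])) hlm.le
    linarith [h ▸ h2]
  have hδlow : ∀ i, L i - a i ≤ δ i := fun i => by linarith [(hδ i).1]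
  have hδhigh : ∀ i, δ i ≤ U i - a i := fun i => by linarith [(hδ i).2]
  have hωδ : ∀ i, lam ≤ ω + δ i := fun i => by linarith [hdenomL i, hδlow i]
  have hωδpos : ∀ i, 0 < ω + δ i := fun i => lt_of_lt_of_le hpos (hωδ i)
  set Δ := ∑ i, δ i with hΔ
  have hΔlow : lam - ω ≤ Δ := by
    have h : ∑ i, (L i - a i) ≤ Δ := Finset.sum_le_sum fun i _ => hδlow i
    rw [Finset.sum_sub_distrib, ← hlam, ← hω] at h
    exact h
  have hωΔ : lam ≤ ω + Δ := by linarith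
  have hωΔpos : 0 < ω + Δ := lt_of_lt_of_le hpos hωΔ
  -- nonnegativity of s and M
  have hM : ∀ i, 0 ≤ mu - ω - (U i - a i) := by
    intro i
    have h : mu - ω - (U i - a i) = mu * ((mu - lam) - (U i - L i)) / (lam + mu) := by
      rw [hωval, haU i]; field_simp; ring
    rw [h]; exact div_nonneg (mul_nonneg hmupos.le (by linarith [hdsum i])) hlm.le
  have hsnn : ∀ i, 0 ≤ s i := by
    intro i
    rw [hs i]
    exact le_trans (div_nonneg (haLpos i) (le_of_lt (lt_of_lt_of_le hpos (hdenomL i))))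
      (le_max_left _ _)
  -- key bound 1 : |δ i| / (ω + δ i) ≤ s i
  have key1 : ∀ i, |δ i| / (ω + δ i) ≤ s i := by
    intro i
    rcases le_or_gt 0 (δ i) with h0 | h0
    · rw [abs_of_nonneg h0, hs i]
      refine le_trans ?_ (le_max_right _ _)
      have hden : 0 < ω - a i + U i := by
        have := hdenomL i; linarith [haLpos i, hLU i]
      rw [div_le_div_iff₀ (hωδpos i) hden]
      nlinarith [hδhigh i, hωpos]
    · rw [abs_of_neg h0, hs i]
      refine le_trans ?_ (le_max_left _ _)
      have hden : 0 < ω - a i + L i := lt_of_lt_of_le hpos (hdenomL i)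
      rw [div_le_div_iff₀ (hωδpos i) hden]
      nlinarith [hδlow i, hωpos]
  -- key bound 2 : |δ i - Δ| ≤ mu - ω - (U i - a i)
  have key2 : ∀ i, |δ i - Δ| ≤ mu - ω - (U i - a i) := by
    intro i
    have herδ : ∑ j ∈ Finset.univ.erase i, δ j + δ i = Δ :=
      Finset.sum_erase_add _ _ (Finset.mem_univ i)
    have herU : ∑ j ∈ Finset.univ.erase i, (U j - a j) + (U i - a i) = mu - ω := by
      rw [Finset.sum_erase_add _ _ (Finset.mem_univ i), Finset.sum_sub_distrib, ← hmu, ← hω]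
    have herL : ∑ j ∈ Finset.univ.erase i, (a j - L j) + (a i - L i) = ω - lam := by
      rw [Finset.sum_erase_add _ _ (Finset.mem_univ i), Finset.sum_sub_distrib, ← hlam, ← hω]
    have hub : ∑ j ∈ Finset.univ.erase i, (-δ j) ≤ ∑ j ∈ Finset.univ.erase i, (a j - L j) :=
      Finset.sum_le_sum fun j _ => by linarith [hδlow j]
    have hlb : ∑ j ∈ Finset.univ.erase i, δ j ≤ ∑ j ∈ Finset.univ.erase i, (U j - a j) :=
      Finset.sum_le_sum fun j _ => hδhigh j
    rw [Finset.sum_neg_distrib] at hub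
    -- comparison: ω - lam - (a i - L i) ≤ mu - ω - (U i - a i)
    have hcomp : ω - lam - (a i - L i) ≤ mu - ω - (U i - a i) := by
      have h : (mu - ω - (U i - a i)) - (ω - lam - (a i - L i))
          = (mu - lam) * ((mu - lam) - (U i - L i)) / (lam + mu) := by
        rw [hωval, haU i, haL i]; field_simp; ring
      have h2 : 0 ≤ (mu - lam) * ((mu - lam) - (U i - L i)) / (lam + mu) :=
        div_nonneg (mul_nonneg (by linarith) (by linarith [hdsum i])) hlm.le
      linarith [h ▸ h2]
    rw [abs_le]
    constructor
    · linarith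
    · linarith
  -- the identity
  have hωne : ω ≠ 0 := ne_of_gt hωpos
  have hωΔne : ω + Δ ≠ 0 := ne_of_gt hωΔpos
  have hid : (∑ i, 1 / (ω + δ i)) - ((Fintype.card ι : ℝ) - 1) / ω - 1 / (ω + Δ)
      = ∑ i, δ i * (δ i - Δ) / (ω * (ω + Δ) * (ω + δ i)) := by
    have h1 : ∀ i ∈ Finset.univ, δ i * (δ i - Δ) / (ω * (ω + Δ) * (ω + δ i))
        = 1 / (ω + δ i) - 1 / ω + δ i / (ω * (ω + Δ)) := by
      intro i _
      have hne : ω + δ i ≠ 0 := ne_of_gt (hωδpos i)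
      field_simp
      ring
    have hsum3 : ∑ i, δ i / (ω * (ω + Δ)) = Δ / (ω * (ω + Δ)) := by
      rw [← Finset.sum_div]
    rw [Finset.sum_congr rfl h1, Finset.sum_add_distrib, Finset.sum_sub_distrib, hsum3,
      Finset.sum_const, Finset.card_univ, nsmul_eq_mul]
    have hsc : ∀ S : ℝ, S - ((Fintype.card ι : ℝ) - 1) / ω - 1 / (ω + Δ)
        = S - (Fintype.card ι : ℝ) * (1 / ω) + Δ / (ω * (ω + Δ)) := by
      intro S
      field_simp
      ring
    exact hsc _
  rw [hid]
  calc |∑ i, δ i * (δ i - Δ) / (ω * (ω + Δ) * (ω + δ i))|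
      ≤ ∑ i, |δ i * (δ i - Δ) / (ω * (ω + Δ) * (ω + δ i))| :=
        Finset.abs_sum_le_sum_abs _ _
    _ ≤ ∑ i, s i * (mu - ω - (U i - a i)) / (ω * lam) := by
        refine Finset.sum_le_sum fun i _ => ?_
        have hDpos : 0 < ω * (ω + Δ) * (ω + δ i) :=
          mul_pos (mul_pos hωpos hωΔpos) (hωδpos i)
        have hwl : 0 < ω * lam := mul_pos hωpos hpos
        rw [abs_div, abs_of_pos hDpos, abs_mul, div_le_div_iff₀ hDpos hwl]
        have k1 : |δ i| ≤ s i * (ω + δ i) := (div_le_iff₀ (hωδpos i)).mp (key1 i)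
        have step1 : |δ i| * |δ i - Δ| ≤ s i * (ω + δ i) * (mu - ω - (U i - a i)) :=
          mul_le_mul k1 (key2 i) (abs_nonneg _)
            (mul_nonneg (hsnn i) (hωδpos i).le)
        have step2 : |δ i| * |δ i - Δ| * (ω * lam)
            ≤ s i * (ω + δ i) * (mu - ω - (U i - a i)) * (ω * lam) :=
          mul_le_mul_of_nonneg_right step1 hwl.le
        have c0 : 0 ≤ s i * (mu - ω - (U i - a i)) * ω * (ω + δ i) :=
          mul_nonneg (mul_nonneg (mul_nonneg (hsnn i) (hM i)) hωpos.le) (hωδpos i).le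
        have step3 := mul_le_mul_of_nonneg_left hωΔ c0
        nlinarith [step2, step3]
    _ = (∑ i, s i * (mu - ω - (U i - a i))) / (ω * lam) := by rw [Finset.sum_div]
end

section
/- Let n ≥ 1 and L, U ∈ ℝ^n with L_i ≤ U_i for all i and λ = Σ_{i=1}^n L_i > 0; set a_i = (U_i + L_i)/2, s_i = (U_i − L_i)/2, and ω = Σ_{i=1}^n a_i, and assume E := Π_{i=1}^n (ω + s_i) − ω^{n−1}(ω + Σ_{i=1}^n s_i) satisfies E/(ω^{n−1} λ) < 1. Then for every δ ∈ ℝ^n with |δ_i| ≤ s_i for all i, |Σ_{i=1}^n log(ω + δ_i) − (n−1) log(ω) − log(ω + Σ_{i=1}^n δ_i)| ≤ − log( 1 − E/(ω^{n−1} λ) ). -/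
open Finset

lemma stmt14_aux {ι : Type*} (ω : ℝ) (δ s : ι → ℝ)
    (hδ : ∀ i, |δ i| ≤ s i) (hpos : ∀ i, 0 ≤ ω + δ i) (hω : 0 ≤ ω)
    (t : Finset ι) :
    |ω * ∏ i ∈ t, (ω + δ i) - ω ^ t.card * (ω + ∑ i ∈ t, δ i)|
      ≤ ω * ∏ i ∈ t, (ω + s i) - ω ^ t.card * (ω + ∑ i ∈ t, s i) := by
  classical
  induction t using Finset.induction_on with
  | empty => simp
  | @insert j t hj ih =>
    rw [Finset.prod_insert hj, Finset.sum_insert hj, Finset.prod_insert hj,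
      Finset.sum_insert hj, Finset.card_insert_of_notMem hj]
    have hid : ∀ d : ι → ℝ,
        ω * ((ω + d j) * ∏ i ∈ t, (ω + d i)) - ω ^ (t.card + 1) * (ω + (d j + ∑ i ∈ t, d i))
          = (ω + d j) * (ω * ∏ i ∈ t, (ω + d i) - ω ^ t.card * (ω + ∑ i ∈ t, d i))
            + d j * (ω ^ t.card * ∑ i ∈ t, d i) := by
      intro d; ring
    rw [hid δ, hid s]
    have hs0 : ∀ i, 0 ≤ s i := fun i => (abs_nonneg _).trans (hδ i)
    have hSd : |∑ i ∈ t, δ i| ≤ ∑ i ∈ t, s i :=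
      (Finset.abs_sum_le_sum_abs _ _).trans (Finset.sum_le_sum fun i _ => hδ i)
    have hRs : 0 ≤ ω * ∏ i ∈ t, (ω + s i) - ω ^ t.card * (ω + ∑ i ∈ t, s i) :=
      (abs_nonneg _).trans ih
    have hωk : (0:ℝ) ≤ ω ^ t.card := pow_nonneg hω _
    have hωsj : 0 ≤ ω + s j := le_trans (hpos j) (by linarith [(abs_le.mp (hδ j)).2])
    have h1 : (ω + δ j) * |ω * ∏ i ∈ t, (ω + δ i) - ω ^ t.card * (ω + ∑ i ∈ t, δ i)|
        ≤ (ω + s j) * (ω * ∏ i ∈ t, (ω + s i) - ω ^ t.card * (ω + ∑ i ∈ t, s i)) :=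
      mul_le_mul (by linarith [(abs_le.mp (hδ j)).2]) ih (abs_nonneg _) hωsj
    have h2 : |δ j| * |ω ^ t.card * ∑ i ∈ t, δ i| ≤ s j * (ω ^ t.card * ∑ i ∈ t, s i) := by
      rw [abs_mul, abs_of_nonneg hωk]
      exact mul_le_mul (hδ j) (mul_le_mul_of_nonneg_left hSd hωk)
        (by positivity) (hs0 j)
    calc |(ω + δ j) * (ω * ∏ i ∈ t, (ω + δ i) - ω ^ t.card * (ω + ∑ i ∈ t, δ i))
            + δ j * (ω ^ t.card * ∑ i ∈ t, δ i)|
        ≤ |(ω + δ j) * (ω * ∏ i ∈ t, (ω + δ i) - ω ^ t.card * (ω + ∑ i ∈ t, δ i))|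
            + |δ j * (ω ^ t.card * ∑ i ∈ t, δ i)| := abs_add_le _ _
      _ ≤ (ω + s j) * (ω * ∏ i ∈ t, (ω + s i) - ω ^ t.card * (ω + ∑ i ∈ t, s i))
            + s j * (ω ^ t.card * ∑ i ∈ t, s i) := by
          rw [abs_mul, abs_mul, abs_of_nonneg (hpos j)]
          exact add_le_add h1 h2

/-- Remainder bound for the logarithm atom function `g(x) = log x` on the
positive domain in interval superposition arithmetic. -/
theorem stmt14 {ι : Type*} [Fintype ι] [Nonempty ι]
    (L U : ι → ℝ) (hLU : ∀ i, L i ≤ U i)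
    (lam : ℝ) (hlam : lam = ∑ i, L i) (hpos : 0 < lam)
    (a s : ι → ℝ)
    (ha : ∀ i, a i = (U i + L i) / 2) (hs : ∀ i, s i = (U i - L i) / 2)
    (ω : ℝ) (hω : ω = ∑ i, a i)
    (E : ℝ)
    (hE : E = (∏ i, (ω + s i)) - ω ^ (Fintype.card ι - 1) * (ω + ∑ i, s i))
    (hE1 : E / (ω ^ (Fintype.card ι - 1) * lam) < 1)
    (δ : ι → ℝ) (hδ : ∀ i, |δ i| ≤ s i) :
    |(∑ i, Real.log (ω + δ i)) - ((Fintype.card ι : ℝ) - 1) * Real.log ω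
        - Real.log (ω + ∑ i, δ i)|
      ≤ - Real.log (1 - E / (ω ^ (Fintype.card ι - 1) * lam)) := by
  classical
  set k := Fintype.card ι - 1 with hk
  have hn : 1 ≤ Fintype.card ι := Fintype.card_pos
  have hkn : k + 1 = Fintype.card ι := Nat.succ_pred_eq_of_pos Fintype.card_pos
  have hs0 : ∀ i, 0 ≤ s i := fun i => (abs_nonneg _).trans (hδ i)
  have hωeq : ω = lam + ∑ i, s i := by
    rw [hω, hlam, ← Finset.sum_add_distrib]
    exact Finset.sum_congr rfl fun i _ => by rw [ha i, hs i]; ring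
  have hSs : 0 ≤ ∑ i, s i := Finset.sum_nonneg fun i _ => hs0 i
  have hωpos : 0 < ω := by rw [hωeq]; linarith
  have hfac : ∀ i, lam ≤ ω + δ i := by
    intro i
    have h1 : s i ≤ ∑ j, s j := Finset.single_le_sum (fun j _ => hs0 j) (Finset.mem_univ i)
    have h2 := (abs_le.mp (hδ i)).1
    linarith [hωeq.ge, hωeq.le]
  have hfacpos : ∀ i, 0 < ω + δ i := fun i => lt_of_lt_of_le hpos (hfac i)
  have hsumδ : -(∑ i, s i) ≤ ∑ i, δ i := by
    have := Finset.sum_le_sum (fun i (_ : i ∈ Finset.univ) => (abs_le.mp (hδ i)).1)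
    simpa using this
  have hsum : lam ≤ ω + ∑ i, δ i := by rw [hωeq]; linarith
  have hsumpos : 0 < ω + ∑ i, δ i := lt_of_lt_of_le hpos hsum
  -- key bound
  have hkey := stmt14_aux ω δ s hδ (fun i => (hfacpos i).le) hωpos.le Finset.univ
  rw [Finset.card_univ, ← hkn, pow_succ] at hkey
  set P := ∏ i, (ω + δ i) with hP
  set D := ω ^ k * (ω + ∑ i, δ i) with hD
  have hkey2 : |P - D| ≤ E := by
    have h1 : ω * P - ω ^ k * ω * (ω + ∑ i, δ i) = ω * (P - D) := by rw [hD]; ring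
    have h2 : ω * ∏ i, (ω + s i) - ω ^ k * ω * (ω + ∑ i, s i) = ω * E := by rw [hE]; ring
    rw [h1, h2, abs_mul, abs_of_pos hωpos] at hkey
    exact le_of_mul_le_mul_left hkey hωpos
  have hEnn : 0 ≤ E := (abs_nonneg _).trans hkey2
  have hc : 0 < ω ^ k * lam := by positivity
  have hDpos : 0 < D := by positivity
  have hcD : ω ^ k * lam ≤ D := mul_le_mul_of_nonneg_left hsum (pow_nonneg hωpos.le _)
  set T := E / (ω ^ k * lam) with hT
  have hT0 : 0 ≤ T := div_nonneg hEnn hc.le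
  have h1t : 0 < 1 - T := by linarith [hE1]
  have hED : E / D ≤ T := by rw [hT]; gcongr
  have hPpos : 0 < P := Finset.prod_pos fun i _ => hfacpos i
  have hxd : |P / D - 1| ≤ T := by
    have h3 : P / D - 1 = (P - D) / D := by field_simp
    have h4 : |P - D| / D ≤ E / D := by gcongr
    rw [h3, abs_div, abs_of_pos hDpos]
    exact h4.trans hED
  have hxlo : 1 - T ≤ P / D := by linarith [(abs_le.mp hxd).1]
  have hxhi : P / D ≤ 1 + T := by linarith [(abs_le.mp hxd).2]
  have hx0 : 0 < P / D := div_pos hPpos hDpos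
  have hup : P / D ≤ 1 / (1 - T) := by
    rw [le_div_iff₀ h1t]
    nlinarith
  have hlogup : Real.log (P / D) ≤ -Real.log (1 - T) := by
    rw [← Real.log_inv, ← one_div]
    exact Real.log_le_log hx0 hup
  have hlogdown : Real.log (1 - T) ≤ Real.log (P / D) := Real.log_le_log h1t hxlo
  have hlogsum : ∑ i, Real.log (ω + δ i) = Real.log P :=
    (Real.log_prod fun i _ => (hfacpos i).ne').symm
  have hcast : ((k : ℕ) : ℝ) = (Fintype.card ι : ℝ) - 1 := by
    rw [hk, Nat.cast_sub hn, Nat.cast_one]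
  have hEq : (∑ i, Real.log (ω + δ i)) - ((Fintype.card ι : ℝ) - 1) * Real.log ω
      - Real.log (ω + ∑ i, δ i) = Real.log (P / D) := by
    rw [hlogsum, Real.log_div hPpos.ne' hDpos.ne', hD,
      Real.log_mul (pow_ne_zero _ hωpos.ne') hsumpos.ne', Real.log_pow, hcast]
    ring
  rw [hEq]
  exact abs_le.mpr ⟨by linarith, hlogup⟩
end

section
/- Let n ≥ 1 and let δ, s ∈ ℝ^n satisfy 2|sin(δ_k/2)| ≤ s_k for all k. Then |Σ_{k=1}^n cos(δ_k) − cos(Σ_{k=1}^n δ_k) − (n−1)| ≤ Π_{k=1}^n (1 + s_k) − Σ_{k=1}^n s_k − 1. -/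
open Finset

lemma aux_abs_exp (x : ℝ) :
    ‖Complex.exp (x * Complex.I) - 1‖ = 2 * |Real.sin (x / 2)| := by
  have h2 : Complex.exp (((x/2 : ℝ) : ℂ) * Complex.I) - Complex.exp (((-(x/2) : ℝ) : ℂ) * Complex.I)
      = 2 * (Real.sin (x/2) : ℂ) * Complex.I := by
    rw [Complex.exp_mul_I, Complex.exp_mul_I, Complex.ofReal_neg, Complex.cos_neg,
      Complex.sin_neg, ← Complex.ofReal_sin]
    ring
  have h : Complex.exp ((x : ℂ) * Complex.I) - 1
      = Complex.exp (((x/2 : ℝ) : ℂ) * Complex.I) * (2 * (Real.sin (x/2) : ℂ) * Complex.I) := by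
    rw [← h2, mul_sub, ← Complex.exp_add, ← Complex.exp_add,
      show ((x/2 : ℝ) : ℂ) * Complex.I + ((x/2 : ℝ) : ℂ) * Complex.I = (x : ℂ) * Complex.I by
        push_cast; ring,
      show ((x/2 : ℝ) : ℂ) * Complex.I + ((-(x/2) : ℝ) : ℂ) * Complex.I = 0 by push_cast; ring,
      Complex.exp_zero]
  rw [h, norm_mul, Complex.norm_exp_ofReal_mul_I, one_mul, norm_mul, norm_mul, Complex.norm_I,
    Complex.norm_two, Complex.norm_real, Real.norm_eq_abs, mul_one]

lemma aux_prod {ι : Type*} (f : ι → ℂ) (g : ι → ℝ)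
    (h : ∀ i, ‖f i‖ ≤ g i) (T : Finset ι) :
    ‖∏ i ∈ T, (1 + f i) - 1 - ∑ i ∈ T, f i‖
      ≤ ∏ i ∈ T, (1 + g i) - 1 - ∑ i ∈ T, g i := by
  classical
  have hg : ∀ i, 0 ≤ g i := fun i => le_trans (norm_nonneg _) (h i)
  induction T using Finset.induction with
  | empty => simp
  | insert _ _ ha ih =>
    rename_i a S
    rw [Finset.prod_insert ha, Finset.sum_insert ha, Finset.prod_insert ha, Finset.sum_insert ha]
    have key : (1 + f a) * ∏ i ∈ S, (1 + f i) - 1 - (f a + ∑ i ∈ S, f i)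
        = (1 + f a) * (∏ i ∈ S, (1 + f i) - 1 - ∑ i ∈ S, f i) + f a * ∑ i ∈ S, f i := by
      ring
    rw [key]
    have h1 : ‖1 + f a‖ ≤ 1 + g a := by
      calc ‖1 + f a‖ ≤ ‖(1 : ℂ)‖ + ‖f a‖ := norm_add_le _ _
      _ ≤ 1 + g a := by simp [h a]
    have h2 : ‖∑ i ∈ S, f i‖ ≤ ∑ i ∈ S, g i := by
      calc ‖∑ i ∈ S, f i‖ ≤ ∑ i ∈ S, ‖f i‖ := norm_sum_le _ _
      _ ≤ ∑ i ∈ S, g i := Finset.sum_le_sum (fun i _ => h i)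
    calc ‖_‖ ≤ ‖(1 + f a) * (∏ i ∈ S, (1 + f i) - 1 - ∑ i ∈ S, f i)‖
          + ‖f a * ∑ i ∈ S, f i‖ := norm_add_le _ _
      _ = ‖1 + f a‖ * ‖∏ i ∈ S, (1 + f i) - 1 - ∑ i ∈ S, f i‖
          + ‖f a‖ * ‖∑ i ∈ S, f i‖ := by rw [norm_mul, norm_mul]
      _ ≤ (1 + g a) * (∏ i ∈ S, (1 + g i) - 1 - ∑ i ∈ S, g i) + g a * ∑ i ∈ S, g i := by
          apply add_le_add
          · exact mul_le_mul h1 ih (norm_nonneg _) (by linarith [hg a])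
          · exact mul_le_mul (h a) h2 (norm_nonneg _) (hg a)
      _ = (1 + g a) * ∏ i ∈ S, (1 + g i) - 1 - (g a + ∑ i ∈ S, g i) := by ring

/-- Intermediate cosine estimate in the derivation of the sine and cosine
remainder bounds of interval superposition arithmetic. -/
theorem stmt15 {ι : Type*} [Fintype ι] [Nonempty ι]
    (δ s : ι → ℝ) (hδs : ∀ k, 2 * |Real.sin (δ k / 2)| ≤ s k) :
    |(∑ k, Real.cos (δ k)) - Real.cos (∑ k, δ k) - ((Fintype.card ι : ℝ) - 1)|
      ≤ (∏ k, (1 + s k)) - (∑ k, s k) - 1 := by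
  classical
  set z : ι → ℂ := fun k => Complex.exp ((δ k : ℂ) * Complex.I) with hz
  set w : ι → ℂ := fun k => z k - 1 with hwdef
  have hw : ∀ k, ‖w k‖ ≤ s k := by
    intro k
    show ‖Complex.exp ((δ k : ℂ) * Complex.I) - 1‖ ≤ s k
    rw [aux_abs_exp]; exact hδs k
  have key := aux_prod w s hw Finset.univ
  have hpz : ∏ k, (1 + w k) = ∏ k, z k := by simp [hwdef]
  have hsz : ∑ k, w k = ∑ k, z k - (Fintype.card ι : ℂ) := by
    simp [hwdef, Finset.sum_sub_distrib]
  rw [hpz, hsz] at key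
  have hprod : (∏ k, z k).re = Real.cos (∑ k, δ k) := by
    have : ∏ k, z k = Complex.exp (((∑ k, δ k : ℝ) : ℂ) * Complex.I) := by
      rw [hz, ← Complex.exp_sum]
      push_cast
      rw [Finset.sum_mul]
    rw [this, Complex.exp_ofReal_mul_I_re]
  have hsum : (∑ k, z k).re = ∑ k, Real.cos (δ k) := by
    rw [Complex.re_sum]
    exact Finset.sum_congr rfl fun k _ => Complex.exp_ofReal_mul_I_re _
  have hre : ((∑ k, Real.cos (δ k)) - Real.cos (∑ k, δ k) - ((Fintype.card ι : ℝ) - 1))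
      = (-(∏ k, z k - 1 - (∑ k, z k - (Fintype.card ι : ℂ)))).re := by
    simp [Complex.neg_re, Complex.sub_re, Complex.one_re, hprod, hsum, Complex.natCast_re]
    ring
  rw [hre]
  calc |(-(∏ k, z k - 1 - (∑ k, z k - (Fintype.card ι : ℂ)))).re|
      ≤ ‖-(∏ k, z k - 1 - (∑ k, z k - (Fintype.card ι : ℂ)))‖ :=
        Complex.abs_re_le_norm _
    _ = ‖∏ k, z k - 1 - (∑ k, z k - (Fintype.card ι : ℂ))‖ := norm_neg _
    _ ≤ (∏ k, (1 + s k)) - (∑ k, s k) - 1 := by linarith [key]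
end

section
/- Let n ≥ 1 and let δ, s ∈ ℝ^n satisfy 2|sin(δ_k/2)| ≤ s_k for all k. Then |Σ_{k=1}^n sin(δ_k) − sin(Σ_{k=1}^n δ_k)| ≤ Π_{k=1}^n (1 + s_k) − Σ_{k=1}^n s_k − 1. -/
open Finset

private lemma prod_sub_one_bound {ι : Type*} [DecidableEq ι] (S : Finset ι) (z : ι → ℂ) (s : ι → ℝ)
    (hz : ∀ k ∈ S, norm (z k - 1) ≤ s k) (hs : ∀ k ∈ S, 0 ≤ s k) :
    norm (∏ k ∈ S, z k - 1) ≤ ∏ k ∈ S, (1 + s k) - 1 := by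
  induction S using Finset.induction_on with
  | empty => simp
  | @insert a S ha ih =>
    have hz' : ∀ k ∈ S, norm (z k - 1) ≤ s k := fun k hk => hz k (mem_insert_of_mem hk)
    have hs' : ∀ k ∈ S, 0 ≤ s k := fun k hk => hs k (mem_insert_of_mem hk)
    have hP : norm (∏ k ∈ S, z k - 1) ≤ ∏ k ∈ S, (1 + s k) - 1 := ih hz' hs'
    have hPpos : (1:ℝ) ≤ ∏ k ∈ S, (1 + s k) := by
      calc (1:ℝ) = ∏ _k ∈ S, (1:ℝ) := by simp
        _ ≤ ∏ k ∈ S, (1 + s k) := Finset.prod_le_prod (fun _ _ => zero_le_one)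
            (fun k hk => by linarith [hs' k hk])
    have hsa : 0 ≤ s a := hs a (mem_insert_self a S)
    have key : (∏ k ∈ insert a S, z k) - 1
        = (z a - 1) * (∏ k ∈ S, z k - 1) + (z a - 1) + (∏ k ∈ S, z k - 1) := by
      rw [Finset.prod_insert ha]; ring
    rw [key, Finset.prod_insert ha]
    calc norm ((z a - 1) * (∏ k ∈ S, z k - 1) + (z a - 1) + (∏ k ∈ S, z k - 1))
        ≤ norm ((z a - 1) * (∏ k ∈ S, z k - 1)) + norm (z a - 1)
          + norm (∏ k ∈ S, z k - 1) := by
          exact le_trans (norm_add_le _ _)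
            (by gcongr; exact norm_add_le _ _)
      _ ≤ s a * (∏ k ∈ S, (1 + s k) - 1) + s a + (∏ k ∈ S, (1 + s k) - 1) := by
          gcongr
          · rw [norm_mul]
            exact mul_le_mul (hz a (mem_insert_self a S)) hP (norm_nonneg _) hsa
          · exact hz a (mem_insert_self a S)
      _ ≤ (1 + s a) * ∏ k ∈ S, (1 + s k) - 1 := by ring_nf; linarith

private lemma sum_sub_prod_bound {ι : Type*} [DecidableEq ι] (S : Finset ι) (z : ι → ℂ) (s : ι → ℝ)
    (hz : ∀ k ∈ S, norm (z k - 1) ≤ s k) (hs : ∀ k ∈ S, 0 ≤ s k) :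
    norm ((∏ k ∈ S, z k - 1) - ∑ k ∈ S, (z k - 1))
      ≤ (∏ k ∈ S, (1 + s k) - 1) - ∑ k ∈ S, s k := by
  induction S using Finset.induction_on with
  | empty => simp
  | @insert a S ha ih =>
    have hz' : ∀ k ∈ S, norm (z k - 1) ≤ s k := fun k hk => hz k (mem_insert_of_mem hk)
    have hs' : ∀ k ∈ S, 0 ≤ s k := fun k hk => hs k (mem_insert_of_mem hk)
    have hP := prod_sub_one_bound S z s hz' hs'
    have hsa : 0 ≤ s a := hs a (mem_insert_self a S)
    have key : (∏ k ∈ insert a S, z k - 1) - ∑ k ∈ insert a S, (z k - 1)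
        = (z a - 1) * (∏ k ∈ S, z k - 1) + ((∏ k ∈ S, z k - 1) - ∑ k ∈ S, (z k - 1)) := by
      rw [Finset.prod_insert ha, Finset.sum_insert ha]; ring
    rw [key, Finset.prod_insert ha, Finset.sum_insert ha]
    calc norm ((z a - 1) * (∏ k ∈ S, z k - 1) + ((∏ k ∈ S, z k - 1) - ∑ k ∈ S, (z k - 1)))
        ≤ norm ((z a - 1) * (∏ k ∈ S, z k - 1))
          + norm ((∏ k ∈ S, z k - 1) - ∑ k ∈ S, (z k - 1)) := norm_add_le _ _
      _ ≤ s a * (∏ k ∈ S, (1 + s k) - 1) + ((∏ k ∈ S, (1 + s k) - 1) - ∑ k ∈ S, s k) := by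
          gcongr
          · rw [norm_mul]
            exact mul_le_mul (hz a (mem_insert_self a S)) hP (norm_nonneg _) hsa
          · exact ih hz' hs'
      _ ≤ ((1 + s a) * ∏ k ∈ S, (1 + s k) - 1) - (s a + ∑ k ∈ S, s k) := by ring_nf; linarith

private lemma abs_exp_mul_I_sub_one (θ : ℝ) :
    norm (Complex.exp (θ * Complex.I) - 1) = 2 * |Real.sin (θ / 2)| := by
  have h : Complex.exp (θ * Complex.I) - 1
      = Complex.ofReal (Real.cos θ - 1) + Complex.ofReal (Real.sin θ) * Complex.I := by
    rw [Complex.exp_mul_I]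
    push_cast
    ring
  rw [h, Complex.norm_def, Complex.normSq_add_mul_I]
  have hsq : (Real.cos θ - 1)^2 + (Real.sin θ)^2 = (2 * |Real.sin (θ / 2)|)^2 := by
    have h2 : (2:ℝ) * (θ/2) = θ := by ring
    have h1 := Real.cos_sq (θ/2)
    rw [h2] at h1
    have h3 := Real.sin_sq_add_cos_sq (θ/2)
    have h4 := Real.sin_sq_add_cos_sq θ
    rw [mul_pow, sq_abs]
    nlinarith
  rw [hsq]
  exact Real.sqrt_sq (by positivity)

/-- Intermediate sine estimate in the derivation of the sine and cosine
remainder bounds of interval superposition arithmetic. -/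
theorem stmt16 {ι : Type*} [Fintype ι] [Nonempty ι]
    (δ s : ι → ℝ) (hδs : ∀ k, 2 * |Real.sin (δ k / 2)| ≤ s k) :
    |(∑ k, Real.sin (δ k)) - Real.sin (∑ k, δ k)|
      ≤ (∏ k, (1 + s k)) - (∑ k, s k) - 1 := by
  set z : ι → ℂ := fun k => Complex.exp (δ k * Complex.I) with hzdef
  have hz : ∀ k ∈ (univ : Finset ι), norm (z k - 1) ≤ s k := fun k _ => by
    rw [hzdef]; rw [abs_exp_mul_I_sub_one]; exact hδs k
  have hs : ∀ k ∈ (univ : Finset ι), 0 ≤ s k := fun k _ =>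
    le_trans (by positivity) (hδs k)
  classical
  have hbound := sum_sub_prod_bound univ z s hz hs
  have hprod : (∏ k, z k) = Complex.exp ((∑ k, δ k : ℝ) * Complex.I) := by
    rw [hzdef]
    rw [← Complex.exp_sum]
    congr 1
    push_cast
    rw [Finset.sum_mul]
  have him : ((∏ k ∈ univ, z k - 1) - ∑ k ∈ univ, (z k - 1)).im
      = Real.sin (∑ k, δ k) - ∑ k, Real.sin (δ k) := by
    rw [Complex.sub_im, Complex.sub_im, Complex.im_sum, hprod]
    push_cast
    simp [hzdef, Complex.exp_ofReal_mul_I_im, ← Complex.ofReal_sum]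
  have h1 : |(∑ k, Real.sin (δ k)) - Real.sin (∑ k, δ k)|
      ≤ norm ((∏ k ∈ univ, z k - 1) - ∑ k ∈ univ, (z k - 1)) := by
    rw [abs_sub_comm, ← him]
    exact Complex.abs_im_le_norm _
  refine h1.trans (hbound.trans_eq ?_)
  ring
end

section
/- Let n ≥ 1, ω ∈ ℝ, and let δ, s ∈ ℝ^n satisfy 2|sin(δ_k/2)| ≤ s_k for all k. Then |Σ_{k=1}^n sin(ω + δ_k) − (n−1) sin(ω) − sin(ω + Σ_{k=1}^n δ_k)| ≤ (|sin(ω)| + |cos(ω)|) ( Π_{k=1}^n (1 + s_k) − Σ_{k=1}^n s_k − 1 ). -/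
open Finset

lemma aux_prod_one {ι : Type*} (A : Finset ι) (u : ι → ℂ) (s : ι → ℝ)
    (h : ∀ k ∈ A, ‖u k‖ ≤ s k) :
    ‖(∏ k ∈ A, (1 + u k)) - 1‖ ≤ (∏ k ∈ A, (1 + s k)) - 1 := by
  induction A using Finset.cons_induction with
  | empty => simp
  | cons a A ha ih =>
    have hs : ∀ k ∈ A, ‖u k‖ ≤ s k := fun k hk => h k (Finset.mem_cons_of_mem hk)
    have ih' := ih hs
    have hQ1 : (1:ℝ) ≤ ∏ k ∈ A, (1 + s k) := by
      calc (1:ℝ) = ∏ _k ∈ A, (1:ℝ) := by simp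
        _ ≤ ∏ k ∈ A, (1 + s k) := by
            refine Finset.prod_le_prod (fun i _ => zero_le_one) (fun i hi => ?_)
            have := (norm_nonneg (u i)).trans (hs i hi)
            linarith
    have hP : ‖∏ k ∈ A, (1 + u k)‖ ≤ ∏ k ∈ A, (1 + s k) := by
      calc ‖∏ k ∈ A, (1 + u k)‖
          = ‖(∏ k ∈ A, (1 + u k)) - 1 + 1‖ := by ring_nf
        _ ≤ ‖(∏ k ∈ A, (1 + u k)) - 1‖ + ‖(1:ℂ)‖ := norm_add_le _ _
        _ = ‖(∏ k ∈ A, (1 + u k)) - 1‖ + 1 := by rw [norm_one]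
        _ ≤ (∏ k ∈ A, (1 + s k)) - 1 + 1 := by linarith
        _ = ∏ k ∈ A, (1 + s k) := by ring
    have ha' : ‖u a‖ ≤ s a := h a (Finset.mem_cons_self a A)
    rw [Finset.prod_cons, Finset.prod_cons]
    have key : (1 + u a) * (∏ k ∈ A, (1 + u k)) - 1
        = ((∏ k ∈ A, (1 + u k)) - 1) + u a * (∏ k ∈ A, (1 + u k)) := by ring
    rw [key]
    calc ‖((∏ k ∈ A, (1 + u k)) - 1) + u a * (∏ k ∈ A, (1 + u k))‖
        ≤ ‖(∏ k ∈ A, (1 + u k)) - 1‖ + ‖u a * (∏ k ∈ A, (1 + u k))‖ := norm_add_le _ _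
      _ = ‖(∏ k ∈ A, (1 + u k)) - 1‖ + ‖u a‖ * ‖∏ k ∈ A, (1 + u k)‖ := by rw [norm_mul]
      _ ≤ ((∏ k ∈ A, (1 + s k)) - 1) + s a * (∏ k ∈ A, (1 + s k)) := by
          gcongr
          exact (norm_nonneg _).trans ha'
      _ = (1 + s a) * (∏ k ∈ A, (1 + s k)) - 1 := by ring

lemma aux_prod_two {ι : Type*} (A : Finset ι) (u : ι → ℂ) (s : ι → ℝ)
    (h : ∀ k ∈ A, ‖u k‖ ≤ s k) :
    ‖(∏ k ∈ A, (1 + u k)) - 1 - ∑ k ∈ A, u k‖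
      ≤ (∏ k ∈ A, (1 + s k)) - 1 - ∑ k ∈ A, s k := by
  induction A using Finset.cons_induction with
  | empty => simp
  | cons a A ha ih =>
    have hs : ∀ k ∈ A, ‖u k‖ ≤ s k := fun k hk => h k (Finset.mem_cons_of_mem hk)
    have ih' := ih hs
    have h1 := aux_prod_one A u s hs
    have hQ1 : (1:ℝ) ≤ ∏ k ∈ A, (1 + s k) := by
      calc (1:ℝ) = ∏ _k ∈ A, (1:ℝ) := by simp
        _ ≤ ∏ k ∈ A, (1 + s k) := by
            refine Finset.prod_le_prod (fun i _ => zero_le_one) (fun i hi => ?_)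
            have := (norm_nonneg (u i)).trans (hs i hi)
            linarith
    have ha' : ‖u a‖ ≤ s a := h a (Finset.mem_cons_self a A)
    rw [Finset.prod_cons, Finset.prod_cons, Finset.sum_cons, Finset.sum_cons]
    have key : (1 + u a) * (∏ k ∈ A, (1 + u k)) - 1 - (u a + ∑ k ∈ A, u k)
        = ((∏ k ∈ A, (1 + u k)) - 1 - ∑ k ∈ A, u k)
            + u a * ((∏ k ∈ A, (1 + u k)) - 1) := by ring
    rw [key]
    calc ‖((∏ k ∈ A, (1 + u k)) - 1 - ∑ k ∈ A, u k)
            + u a * ((∏ k ∈ A, (1 + u k)) - 1)‖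
        ≤ ‖(∏ k ∈ A, (1 + u k)) - 1 - ∑ k ∈ A, u k‖
            + ‖u a * ((∏ k ∈ A, (1 + u k)) - 1)‖ := norm_add_le _ _
      _ = ‖(∏ k ∈ A, (1 + u k)) - 1 - ∑ k ∈ A, u k‖
            + ‖u a‖ * ‖(∏ k ∈ A, (1 + u k)) - 1‖ := by rw [norm_mul]
      _ ≤ ((∏ k ∈ A, (1 + s k)) - 1 - ∑ k ∈ A, s k)
            + s a * ((∏ k ∈ A, (1 + s k)) - 1) := by
          gcongr
          exact (norm_nonneg _).trans ha'
      _ = (1 + s a) * (∏ k ∈ A, (1 + s k)) - 1 - (s a + ∑ k ∈ A, s k) := by ring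

/-- Remainder bound for the sine atom function `g(x) = sin x` in interval
superposition arithmetic. -/
theorem stmt17 {ι : Type*} [Fintype ι] [Nonempty ι]
    (ω : ℝ) (δ s : ι → ℝ) (hδs : ∀ k, 2 * |Real.sin (δ k / 2)| ≤ s k) :
    |(∑ k, Real.sin (ω + δ k)) - ((Fintype.card ι : ℝ) - 1) * Real.sin ω
        - Real.sin (ω + ∑ k, δ k)|
      ≤ (|Real.sin ω| + |Real.cos ω|) * ((∏ k, (1 + s k)) - (∑ k, s k) - 1) := by
  classical
  set u : ι → ℂ := fun k => Complex.exp (δ k * Complex.I) - 1 with hu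
  have hus : ∀ k ∈ (Finset.univ : Finset ι), ‖u k‖ ≤ s k := by
    intro k _
    rw [hu, aux_abs_exp]
    exact hδs k
  have hs0 : ∀ k ∈ (Finset.univ : Finset ι), ‖(0:ι → ℂ) k‖ ≤ s k := by
    intro k _
    simpa using (by positivity : (0:ℝ) ≤ 2 * |Real.sin (δ k / 2)|).trans (hδs k)
  have hP0 : 0 ≤ (∏ k, (1 + s k)) - 1 - ∑ k, s k := by
    have := aux_prod_two Finset.univ 0 s hs0
    simpa using this
  have hρ := aux_prod_two Finset.univ u s hus
  -- the complex expression
  set z : ℂ := (∑ k, Complex.exp ((ω + δ k) * Complex.I))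
      - ((Fintype.card ι : ℂ) - 1) * Complex.exp (ω * Complex.I)
      - Complex.exp ((ω + ∑ k, δ k) * Complex.I) with hz
  have hzfac : z = Complex.exp (ω * Complex.I) *
      (((∑ k, u k) + 1) - ∏ k, (1 + u k)) := by
    rw [hz, hu]
    have hsum : (∑ k, Complex.exp ((ω + δ k) * Complex.I))
        = Complex.exp (ω * Complex.I) * ∑ k, Complex.exp (δ k * Complex.I) := by
      rw [Finset.mul_sum]
      refine Finset.sum_congr rfl fun k _ => ?_
      rw [← Complex.exp_add, add_mul]
    have hprod : Complex.exp ((ω + ∑ k, δ k) * Complex.I)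
        = Complex.exp (ω * Complex.I) * ∏ k, Complex.exp (δ k * Complex.I) := by
      rw [← Complex.exp_sum, ← Complex.exp_add, add_mul, Complex.ofReal_sum,
        Finset.sum_mul]
    rw [hsum, hprod]
    have h1 : (∑ k, Complex.exp (δ k * Complex.I))
        = (Fintype.card ι : ℂ) + ∑ k, (Complex.exp (δ k * Complex.I) - 1) := by
      rw [Finset.sum_sub_distrib]
      simp [Finset.card_univ]
    have h2 : (∏ k : ι, Complex.exp (δ k * Complex.I))
        = ∏ k, (1 + (Complex.exp (δ k * Complex.I) - 1)) := by
      refine Finset.prod_congr rfl fun k _ => ?_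
      ring
    rw [h1, h2]
    ring
  have hzim : z.im = (∑ k, Real.sin (ω + δ k))
      - ((Fintype.card ι : ℝ) - 1) * Real.sin ω - Real.sin (ω + ∑ k, δ k) := by
    simp only [hz, Complex.sub_im, Complex.im_sum, ← Complex.ofReal_add,
      Complex.exp_ofReal_mul_I_im, Complex.mul_im, Complex.exp_ofReal_mul_I_re,
      Complex.sub_re, Complex.natCast_re, Complex.one_re, Complex.natCast_im,
      Complex.one_im]
    ring
  have hznorm : ‖z‖ ≤ (∏ k, (1 + s k)) - 1 - ∑ k, s k := by
    rw [hzfac, norm_mul]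
    have : ‖Complex.exp (ω * Complex.I)‖ = 1 := by
      exact Complex.norm_exp_ofReal_mul_I ω
    rw [this, one_mul]
    calc ‖((∑ k, u k) + 1) - ∏ k, (1 + u k)‖
        = ‖(∏ k, (1 + u k)) - 1 - ∑ k, u k‖ := by
          rw [show ((∑ k, u k) + 1) - ∏ k, (1 + u k)
              = -((∏ k, (1 + u k)) - 1 - ∑ k, u k) by ring, norm_neg]
      _ ≤ _ := hρ
  have him : |z.im| ≤ ‖z‖ := by
    exact Complex.abs_im_le_norm z
  rw [← hzim]
  have hsc : (1:ℝ) ≤ |Real.sin ω| + |Real.cos ω| := by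
    nlinarith [Real.sin_sq_add_cos_sq ω, sq_abs (Real.sin ω), sq_abs (Real.cos ω),
      abs_nonneg (Real.sin ω), abs_nonneg (Real.cos ω), Real.abs_sin_le_one ω,
      Real.abs_cos_le_one ω]
  calc |z.im| ≤ ‖z‖ := him
    _ ≤ (∏ k, (1 + s k)) - 1 - ∑ k, s k := hznorm
    _ = 1 * ((∏ k, (1 + s k)) - (∑ k, s k) - 1) := by ring
    _ ≤ (|Real.sin ω| + |Real.cos ω|) * ((∏ k, (1 + s k)) - (∑ k, s k) - 1) := by
        apply mul_le_mul_of_nonneg_right hsc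
        linarith
end

section
/- Let n ≥ 1 and δ_1,…,δ_n ∈ ℝ be such that cos(δ_i) ≠ 0 for all i ∈ {1,…,n} and cos(Σ_{k=1}^i δ_k) ≠ 0 for all i ∈ {1,…,n}. Then tan(Σ_{i=1}^n δ_i) − Σ_{i=1}^n tan(δ_i) = Σ_{i=1}^{n−1} tan(δ_{i+1}) · tan(Σ_{k=1}^{i} δ_k) · tan(Σ_{k=1}^{i+1} δ_k). -/
open Finset

lemma tan_add_diff (a b : ℝ) (ha : Real.cos a ≠ 0) (hb : Real.cos b ≠ 0)
    (hab : Real.cos (a + b) ≠ 0) :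
    Real.tan (a + b) - Real.tan a - Real.tan b
      = Real.tan a * Real.tan b * Real.tan (a + b) := by
  simp only [Real.tan_eq_sin_div_cos]
  field_simp
  rw [Real.sin_add, Real.cos_add]
  ring

/-- Generalized difference form of the tangent addition theorem: with
`δ 0, …, δ (n-1)` playing the role of `δ_1, …, δ_n`,
`tan(∑_{i=1}^n δ_i) - ∑_{i=1}^n tan(δ_i)
  = ∑_{i=1}^{n-1} tan(δ_{i+1}) tan(∑_{k=1}^i δ_k) tan(∑_{k=1}^{i+1} δ_k)`,
provided all the tangents involved are defined. -/
theorem stmt19 (n : ℕ) (hn : 1 ≤ n) (δ : ℕ → ℝ)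
    (hcos : ∀ i < n, Real.cos (δ i) ≠ 0)
    (hcossum : ∀ i, 1 ≤ i → i ≤ n → Real.cos (∑ k ∈ Finset.range i, δ k) ≠ 0) :
    Real.tan (∑ k ∈ Finset.range n, δ k) - ∑ i ∈ Finset.range n, Real.tan (δ i)
      = ∑ i ∈ Finset.range (n - 1),
          Real.tan (δ (i + 1)) * Real.tan (∑ k ∈ Finset.range (i + 1), δ k)
            * Real.tan (∑ k ∈ Finset.range (i + 2), δ k) := by
  induction n with
  | zero => omega
  | succ m ih =>
    rcases Nat.eq_or_lt_of_le hn with h1 | h1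
    · simp [← h1]
    · have hm : 1 ≤ m := by omega
      have ihm := ih hm (fun i hi => hcos i (by omega))
        (fun i h1 h2 => hcossum i h1 (by omega))
      have key := tan_add_diff (∑ k ∈ Finset.range m, δ k) (δ m)
        (hcossum m hm (by omega)) (hcos m (by omega))
        (by rw [← Finset.sum_range_succ]; exact hcossum (m+1) (by omega) le_rfl)
      rw [Finset.sum_range_succ, Finset.sum_range_succ (f := fun i => Real.tan (δ i))]
      have hm1 : m + 1 - 1 = (m - 1) + 1 := by omega
      rw [hm1, Finset.sum_range_succ]
      have he : m - 1 + 1 = m := by omega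
      have he2 : m - 1 + 2 = m + 1 := by omega
      rw [he, he2, ← ihm, Finset.sum_range_succ (f := δ)]
      linarith [key]
end
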